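/- Let G be a graph with r connected components. Then the (r−1)-dimensional skeleton of the independence complex of G is vertex-decomposable; consequently depth(Ind(G)) ≥ r − 1. -/

import Mathlib

open Finset

/-- A (finite, abstract) simplicial complex: a nonempty collection of finite
sets closed under taking subsets. -/
def IsComplex {α : Type} [DecidableEq α] (Δ : Finset (Finset α)) : Prop :=
  Δ.Nonempty ∧ ∀ A ∈ Δ, ∀ B ⊆ A, B ∈ Δ

/-- The link of a face `S` in `Δ`. -/
def link {α : Type} [DecidableEq α] (Δ : Finset (Finset α)) (S : Finset α) :
    Finset (Finset α) :=
  Δ.filter fun F => Disjoint F S ∧ F ∪ S ∈ Δ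

/-- The deletion of a vertex `v` from `Δ`. -/
def del {α : Type} [DecidableEq α] (Δ : Finset (Finset α)) (v : α) :
    Finset (Finset α) :=
  Δ.filter fun F => v ∉ F

/-- The dimension of a simplicial complex, as an integer (`-1` for `{∅}`). -/
def dimC {α : Type} (Δ : Finset (Finset α)) : ℤ := ((Δ.sup Finset.card : ℕ) : ℤ) - 1

/-- A facet: a maximal face. -/
def IsFacet {α : Type} (Δ : Finset (Finset α)) (A : Finset α) : Prop :=
  A ∈ Δ ∧ ∀ B ∈ Δ, A ⊆ B → B = A

/-- The simplicial boundary of a basis element: `∂A = ∑_{a ∈ A} (-1)^{pos(a)} (A \ {a})`,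
where `pos(a)` is the position of `a` in the increasing ordering of `A`. -/
noncomputable def bdElt {α : Type} [LinearOrder α] (F : Type) [Field F]
    (A : Finset α) : Finset α →₀ F :=
  ∑ a ∈ A, ((-1 : F) ^ (A.filter (· < a)).card) • Finsupp.single (A.erase a) (1 : F)

/-- The boundary operator on (augmented) simplicial chains, where the chain in
cardinality `k` is spanned by the `k`-element sets (in particular the empty set
spans the augmentation degree). -/
noncomputable def bd {α : Type} [LinearOrder α] (F : Type) [Field F] :
    (Finset α →₀ F) →ₗ[F] (Finset α →₀ F) :=
  Finsupp.lsum F fun A => LinearMap.toSpanSingleton F (Finset α →₀ F) (bdElt F A)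

/-- Vanishing of the reduced simplicial homology `H̃_i(Δ; F)`: every reduced
cycle supported on `(i+1)`-element faces of `Δ` is the boundary of a chain
supported on `(i+2)`-element faces of `Δ`. -/
def HomologyVanishes {α : Type} [LinearOrder α] (F : Type) [Field F]
    (Δ : Finset (Finset α)) (i : ℤ) : Prop :=
  ∀ x : Finset α →₀ F, (∀ A ∈ x.support, A ∈ Δ ∧ (A.card : ℤ) = i + 1) →
    bd F x = 0 →
    ∃ y : Finset α →₀ F, (∀ A ∈ y.support, A ∈ Δ ∧ (A.card : ℤ) = i + 2) ∧
      bd F y = x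

/-- `Δ` is Cohen–Macaulay over `F`: for every face `A` and every
`i < dim link(Δ, A)`, the reduced homology `H̃_i(link(Δ,A); F)` vanishes. -/
def IsCM {α : Type} [LinearOrder α] (F : Type) [Field F]
    (Δ : Finset (Finset α)) : Prop :=
  ∀ A ∈ Δ, ∀ i : ℤ, i < dimC (link Δ A) → HomologyVanishes F (link Δ A) i

/-- The `d`-dimensional skeleton of `Δ`: all faces of dimension at most `d`. -/
def skeleton {α : Type} (Δ : Finset (Finset α)) (d : ℤ) : Finset (Finset α) :=
  Δ.filter fun A => (A.card : ℤ) ≤ d + 1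

/-- The depth of `Δ` over `F`: the largest `d` such that the `d`-dimensional
skeleton of `Δ` is Cohen–Macaulay over `F`. -/
noncomputable def depthC {α : Type} [LinearOrder α] (F : Type) [Field F]
    (Δ : Finset (Finset α)) : ℤ :=
  sSup {d : ℤ | d ≤ dimC Δ ∧ IsCM F (skeleton Δ d)}

/-- Vertex-decomposability: `Δ` is a simplex, or has a shedding vertex `v`
(every face containing `v` admits an exchange) whose deletion and link are
both vertex-decomposable. -/
inductive VertexDecomposable {α : Type} [DecidableEq α] :
    Finset (Finset α) → Prop
  | simplex (A : Finset α) : VertexDecomposable A.powerset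
  | shed (Δ : Finset (Finset α)) (v : α)
      (hshed : ∀ A ∈ Δ, v ∈ A → ∃ w, w ≠ v ∧ w ∉ A ∧ insert w (A.erase v) ∈ Δ)
      (hdel : VertexDecomposable (del Δ v))
      (hlink : VertexDecomposable (link Δ {v})) :
      VertexDecomposable Δ

/-- The independence complex of a graph: its faces are the independent
(edgeless) vertex subsets. -/
def indComplex (n : ℕ) (G : SimpleGraph (Fin n)) [DecidableRel G.Adj] :
    Finset (Finset (Fin n)) :=
  (Finset.univ : Finset (Fin n)).powerset.filter
    fun A => ∀ a ∈ A, ∀ b ∈ A, ¬ G.Adj a b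
section Chain

variable {α : Type} [LinearOrder α] (F : Type) [Field F]

lemma bd_single (A : Finset α) : bd F (Finsupp.single A (1:F)) = bdElt F A := by
  rw [bd, Finsupp.lsum_single, LinearMap.toSpanSingleton_apply, one_smul]

lemma bd_apply_sum (x : Finset α →₀ F) :
    bd F x = x.sum fun A c => c • bdElt F A := by
  rfl

lemma bd_support (x : Finset α →₀ F) {A : Finset α} (hA : A ∈ (bd F x).support) :
    ∃ B ∈ x.support, ∃ b ∈ B, A = B.erase b := by
  rw [bd_apply_sum] at hA
  have h1 := Finsupp.support_sum hA
  rw [Finset.mem_biUnion] at h1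
  obtain ⟨B, hB, hAB⟩ := h1
  refine ⟨B, hB, ?_⟩
  have h2 : A ∈ (bdElt F B).support := Finsupp.support_smul hAB
  rw [bdElt] at h2
  have h3 := Finsupp.support_finset_sum h2
  rw [Finset.mem_biUnion] at h3
  obtain ⟨b, hb, hAb⟩ := h3
  have h4 := Finsupp.support_single_subset (Finsupp.support_smul hAb)
  exact ⟨b, hb, by simpa using h4⟩

/-- The cone on a basis element. -/
noncomputable def coneElt (v : α) (B : Finset α) : Finset α →₀ F :=
  if v ∈ B then 0 else ((-1:F) ^ (B.filter (· < v)).card) • Finsupp.single (insert v B) (1:F)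

/-- The cone (with apex `v`) operator on chains. -/
noncomputable def cone (v : α) : (Finset α →₀ F) →ₗ[F] (Finset α →₀ F) :=
  Finsupp.lsum F fun B => LinearMap.toSpanSingleton F (Finset α →₀ F) (coneElt F v B)

lemma cone_single (v : α) (B : Finset α) (c : F) :
    cone F v (Finsupp.single B c) = c • coneElt F v B := by
  rw [cone, Finsupp.lsum_single, LinearMap.toSpanSingleton_apply]

lemma cone_apply (v : α) (x : Finset α →₀ F) (A : Finset α) :
    cone F v x A =
      if v ∈ A then ((-1:F) ^ ((A.erase v).filter (· < v)).card) * x (A.erase v) else 0 := by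
  induction x using Finsupp.induction_linear with
  | zero => simp
  | add f g hf hg =>
      rw [map_add]
      simp only [Finsupp.coe_add, Pi.add_apply, Finsupp.add_apply, hf, hg]
      split <;> ring
  | single B c =>
      rw [cone_single, coneElt]
      by_cases hvA : v ∈ A
      · by_cases hvB : v ∈ B
        · have hne : B ≠ A.erase v := fun h => (Finset.notMem_erase v A) (h ▸ hvB)
          simp [hvB, hvA, Finsupp.single_apply, hne]
        · by_cases hBA : B = A.erase v
          · subst hBA
            have h1 : insert v (A.erase v) = A := Finset.insert_erase hvA
            simp only [hvB, if_false, smul_smul, Finsupp.smul_single, smul_eq_mul, mul_one,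
              Finsupp.single_apply, h1, if_pos rfl, if_pos hvA, ite_true]
            ring
          · have h2 : insert v B ≠ A := by
              intro h
              exact hBA (by rw [← h, Finset.erase_insert hvB])
            simp [hvB, hvA, Finsupp.single_apply, h2, hBA]
      · by_cases hvB : v ∈ B
        · simp [hvB, hvA]
        · have h3 : insert v B ≠ A := fun h => hvA (h ▸ Finset.mem_insert_self v B)
          simp [hvB, hvA, Finsupp.single_apply, h3]

/-- The "delink" operator, inverse to the cone on faces containing `v`. -/
noncomputable def delinkElt (v : α) (B : Finset α) : Finset α →₀ F :=
  if v ∈ B then ((-1:F) ^ ((B.erase v).filter (· < v)).card) • Finsupp.single (B.erase v) (1:F)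
  else 0

noncomputable def delink (v : α) : (Finset α →₀ F) →ₗ[F] (Finset α →₀ F) :=
  Finsupp.lsum F fun B => LinearMap.toSpanSingleton F (Finset α →₀ F) (delinkElt F v B)

lemma delink_single (v : α) (B : Finset α) (c : F) :
    delink F v (Finsupp.single B c) = c • delinkElt F v B := by
  rw [delink, Finsupp.lsum_single, LinearMap.toSpanSingleton_apply]

lemma delink_apply (v : α) (x : Finset α →₀ F) (B : Finset α) :
    delink F v x B =
      if v ∈ B then 0 else ((-1:F) ^ (B.filter (· < v)).card) * x (insert v B) := by
  induction x using Finsupp.induction_linear with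
  | zero => simp
  | add f g hf hg =>
      rw [map_add]
      simp only [Finsupp.coe_add, Pi.add_apply, Finsupp.add_apply, hf, hg]
      split <;> ring
  | single C c =>
      rw [delink_single, delinkElt]
      by_cases hvB : v ∈ B
      · by_cases hvC : v ∈ C
        · have hne : C.erase v ≠ B := fun h => (Finset.notMem_erase v C) (h ▸ hvB)
          simp [hvC, hvB, Finsupp.single_apply, hne]
        · simp [hvC, hvB]
      · by_cases hvC : v ∈ C
        · by_cases hCB : C.erase v = B
          · subst hCB
            have hC : C = insert v (C.erase v) := (Finset.insert_erase hvC).symm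
            simp only [hvC, if_true, smul_smul, Finsupp.smul_single, smul_eq_mul, mul_one,
              Finsupp.single_apply, if_pos rfl, if_neg hvB, ← hC, ite_true]
            ring
          · have hC : C ≠ insert v B := by
              intro h
              exact hCB (by rw [h, Finset.erase_insert hvB])
            simp [hvC, hvB, Finsupp.single_apply, hCB, hC]
        · have hC : C ≠ insert v B := fun h => hvC (h ▸ Finset.mem_insert_self v B)
          simp [hvC, hvB, Finsupp.single_apply, hC]

lemma decomp (v : α) (x : Finset α →₀ F) :
    x = Finsupp.filter (fun A => v ∉ A) x + cone F v (delink F v x) := by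
  ext A
  rw [Finsupp.add_apply, Finsupp.filter_apply, cone_apply]
  by_cases hvA : v ∈ A
  · rw [if_pos hvA, if_neg (by simpa using hvA), delink_apply,
      if_neg (Finset.notMem_erase v A), Finset.insert_erase hvA, zero_add, ← mul_assoc,
      ← pow_add, Even.neg_one_pow ⟨_, rfl⟩, one_mul]
  · rw [if_neg hvA, if_pos hvA, add_zero]

end Chain
section Chain2

variable {α : Type} [LinearOrder α] (F : Type) [Field F]

lemma cone_bdElt_of_mem (v : α) (B : Finset α) (hv : v ∈ B) :
    cone F v (bdElt F B) = Finsupp.single B (1:F) := by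
  rw [bdElt, map_sum, Finset.sum_eq_single_of_mem v hv]
  · rw [map_smul, cone_single, one_smul, coneElt, if_neg (Finset.notMem_erase v B),
      smul_smul, ← pow_add]
    have hs : (Finset.filter (· < v) (B.erase v)).card = (Finset.filter (· < v) B).card := by
      rw [Finset.filter_erase, Finset.erase_eq_of_notMem]
      simp
    rw [hs, Even.neg_one_pow ⟨_, rfl⟩, one_smul, Finset.insert_erase hv]
  · intro a ha hne
    rw [map_smul, cone_single, one_smul, coneElt,
      if_pos (Finset.mem_erase.mpr ⟨Ne.symm hne, hv⟩), smul_zero]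

lemma bd_cone_single (v : α) (B : Finset α) (hv : v ∉ B) :
    bd F (coneElt F v B) + cone F v (bdElt F B) = Finsupp.single B (1:F) := by
  set p := (B.filter (· < v)).card with hpdef
  have e1 : bd F (coneElt F v B) =
      Finsupp.single B (1:F)
        + ∑ a ∈ B, ((-1:F)^(p + ((insert v B).filter (· < a)).card)) •
            Finsupp.single (insert v (B.erase a)) (1:F) := by
    rw [coneElt, if_neg hv, map_smul, bd_single, bdElt, Finset.sum_insert hv, smul_add,
        Finset.smul_sum]
    congr 1
    · rw [Finset.filter_insert, if_neg (lt_irrefl v), Finset.erase_insert hv, smul_smul,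
        ← pow_add, ← hpdef, Even.neg_one_pow ⟨p, rfl⟩, one_smul]
    · apply Finset.sum_congr rfl
      intro a ha
      have hva : v ≠ a := fun h => hv (h ▸ ha)
      rw [smul_smul, ← pow_add, Finset.erase_insert_of_ne hva]
  have e2 : cone F v (bdElt F B) =
      ∑ a ∈ B, ((-1:F)^((B.filter (· < a)).card + ((B.erase a).filter (· < v)).card)) •
        Finsupp.single (insert v (B.erase a)) (1:F) := by
    rw [bdElt, map_sum]
    apply Finset.sum_congr rfl
    intro a ha
    have hvea : v ∉ B.erase a := fun h => hv (Finset.mem_of_mem_erase h)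
    rw [map_smul, cone_single, one_smul, coneElt, if_neg hvea, smul_smul, ← pow_add]
  rw [e1, e2, add_assoc, ← Finset.sum_add_distrib, add_eq_left]
  apply Finset.sum_eq_zero
  intro a ha
  rw [← add_smul]
  have hva : v ≠ a := fun h => hv (h ▸ ha)
  have hzero : ((-1:F)^(p + ((insert v B).filter (· < a)).card)
      + (-1:F)^((B.filter (· < a)).card + ((B.erase a).filter (· < v)).card)) = 0 := by
    set pa := (B.filter (· < a)).card
    set s := ((B.erase a).filter (· < v)).card with hsdef
    rcases lt_or_gt_of_ne hva with hlt | hgt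
    · -- v < a
      have hq : ((insert v B).filter (· < a)).card = pa + 1 := by
        rw [Finset.filter_insert, if_pos hlt, Finset.card_insert_of_notMem]
        intro h
        exact hv (Finset.mem_of_mem_filter v h)
      have hs : s = p := by
        rw [hsdef, Finset.filter_erase, Finset.erase_eq_of_notMem, hpdef]
        intro h
        exact absurd (Finset.mem_filter.mp h).2 (asymm hlt)
      have harith : p + (pa + 1) = (pa + s) + 1 := by omega
      rw [hq, harith, pow_succ]
      ring
    · -- a < v
      have hq : ((insert v B).filter (· < a)).card = pa := by
        rw [Finset.filter_insert, if_neg (asymm hgt)]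
      have hmem : a ∈ B.filter (· < v) := Finset.mem_filter.mpr ⟨ha, hgt⟩
      have hppos : 1 ≤ p := Finset.card_pos.mpr ⟨a, hmem⟩
      have hs : s = p - 1 := by
        rw [hsdef, Finset.filter_erase, Finset.card_erase_of_mem hmem, hpdef]
      have harith : p + pa = (pa + s) + 1 := by omega
      rw [hq, harith, pow_succ]
      ring
  rw [hzero, zero_smul]

end Chain2
section Chain3

variable {α : Type} [LinearOrder α] (F : Type) [Field F]

/-- The fundamental chain homotopy: `∂ ∘ cone + cone ∘ ∂ = id`. -/
lemma bd_cone_add_cone_bd (v : α) (x : Finset α →₀ F) :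
    bd F (cone F v x) + cone F v (bd F x) = x := by
  induction x using Finsupp.induction_linear with
  | zero => simp
  | add f g hf hg =>
      rw [map_add, map_add, map_add, map_add, add_add_add_comm, hf, hg]
  | single B c =>
      have h1 : Finsupp.single B c = c • Finsupp.single B (1:F) := by
        rw [Finsupp.smul_single, smul_eq_mul, mul_one]
      rw [h1, map_smul, map_smul, map_smul, map_smul, ← smul_add]
      congr 1
      by_cases hv : v ∈ B
      · rw [cone_single, one_smul, coneElt, if_pos hv, map_zero, zero_add, bd_single,
          cone_bdElt_of_mem F v B hv]
      · rw [cone_single, one_smul, bd_single, bd_cone_single F v B hv]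

lemma cone_support (v : α) (x : Finset α →₀ F) {A : Finset α}
    (hA : A ∈ (cone F v x).support) : v ∈ A ∧ A.erase v ∈ x.support := by
  have h := Finsupp.mem_support_iff.mp hA
  rw [cone_apply] at h
  by_cases hv : v ∈ A
  · rw [if_pos hv] at h
    refine ⟨hv, Finsupp.mem_support_iff.mpr fun h0 => h ?_⟩
    rw [h0, mul_zero]
  · rw [if_neg hv] at h
    exact absurd rfl h

/-- Separation of a cycle: if `bd x = 0` then, writing `c` for the part of `x`
away from `v` and `w` for the delink, we get `bd c + w = 0` and `bd w = 0`. -/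
lemma cycle_separation (v : α) (x : Finset α →₀ F) (hx : bd F x = 0) :
    bd F (Finsupp.filter (fun A => v ∉ A) x) + delink F v x = 0 ∧
      bd F (delink F v x) = 0 := by
  set c := Finsupp.filter (fun A => v ∉ A) x with hc
  set w := delink F v x with hw
  have hwfree : ∀ A : Finset α, v ∈ A → w A = 0 := by
    intro A hvA
    rw [hw, delink_apply, if_pos hvA]
  have hcfree : ∀ A : Finset α, v ∈ A → c A = 0 := by
    intro A hvA
    rw [hc, Finsupp.filter_apply, if_neg (by simpa using hvA)]
  have hbdfree : ∀ (z : Finset α →₀ F), (∀ A, v ∈ A → z A = 0) →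
      ∀ A, v ∈ A → (bd F z) A = 0 := by
    intro z hz A hvA
    by_contra h0
    obtain ⟨B, hB, b, hb, hAB⟩ := bd_support F z (Finsupp.mem_support_iff.mpr h0)
    have hvB : v ∈ B := by
      rw [hAB] at hvA
      exact Finset.mem_of_mem_erase hvA
    exact Finsupp.mem_support_iff.mp hB (hz B hvB)
  -- from decomposition and the homotopy identity:
  have hkey : bd F c + (w - cone F v (bd F w)) = 0 := by
    have hdec := decomp F v x
    have hch' : bd F (cone F v w) = w - cone F v (bd F w) :=
      eq_sub_of_add_eq (bd_cone_add_cone_bd F v w)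
    calc bd F c + (w - cone F v (bd F w))
        = bd F c + bd F (cone F v w) := by rw [hch']
      _ = bd F (c + cone F v w) := (map_add (bd F) c (cone F v w)).symm
      _ = bd F x := by rw [← hdec]
      _ = 0 := hx
  -- evaluate at faces containing v : cone (bd w) vanishes there iff (bd w) does
  have hbdw : bd F w = 0 := by
    ext B
    by_cases hvB : v ∈ B
    · exact hbdfree w hwfree B hvB
    · have h1 : (bd F c + (w - cone F v (bd F w))) (insert v B)
          = (0 : Finset α →₀ F) (insert v B) := by rw [hkey]
      simp only [Finsupp.add_apply, Finsupp.sub_apply, Finsupp.coe_zero, Pi.zero_apply] at h1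
      rw [hbdfree c hcfree _ (Finset.mem_insert_self v B),
        hwfree _ (Finset.mem_insert_self v B), cone_apply,
        if_pos (Finset.mem_insert_self v B), Finset.erase_insert hvB] at h1
      have h2 : ((-1:F) ^ (Finset.filter (· < v) B).card) * (bd F w) B = 0 := by
        have := h1
        simpa using this
      rcases mul_eq_zero.mp h2 with h3 | h3
      · exact absurd h3 (pow_ne_zero _ (neg_ne_zero.mpr one_ne_zero))
      · simpa using h3
  constructor
  · have := hkey
    rw [hbdw, map_zero, sub_zero] at this
    exact this
  · exact hbdw

end Chain3
section VDComplex

variable {α : Type} [LinearOrder α]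

lemma union_singleton' {β : Type} [DecidableEq β] (s : Finset β) (a : β) :
    s ∪ {a} = insert a s := by
  ext x; simp [or_comm]

lemma vd_isComplex {Δ : Finset (Finset α)} (h : VertexDecomposable Δ) : IsComplex Δ := by
  induction h with
  | simplex A =>
      exact ⟨⟨∅, Finset.empty_mem_powerset A⟩, fun X hX B hB =>
        Finset.mem_powerset.mpr (hB.trans (Finset.mem_powerset.mp hX))⟩
  | shed Δ v hshed hdel hlink IHdel IHlink =>
      obtain ⟨hdelne, hdelclosed⟩ := IHdel
      obtain ⟨hlinkne, hlinkclosed⟩ := IHlink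
      have hdelsub : del Δ v ⊆ Δ := Finset.filter_subset _ _
      have key : ∀ A ∈ Δ, A.erase v ∈ del Δ v := by
        intro A hA
        by_cases hv : v ∈ A
        · obtain ⟨w, hwv, hwA, hwin⟩ := hshed A hA hv
          have h1 : insert w (A.erase v) ∈ del Δ v := by
            rw [del, Finset.mem_filter]
            refine ⟨hwin, ?_⟩
            simp only [Finset.mem_insert, not_or]
            exact ⟨fun h => hwv h.symm, Finset.notMem_erase v A⟩
          exact hdelclosed _ h1 _ (Finset.subset_insert _ _)
        · rw [Finset.erase_eq_of_notMem hv]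
          exact Finset.mem_filter.mpr ⟨hA, hv⟩
      constructor
      · obtain ⟨A, hA⟩ := hdelne
        exact ⟨A, hdelsub hA⟩
      intro A hA B hB
      by_cases hvB : v ∈ B
      · have hvA : v ∈ A := hB hvB
        have h2 : A.erase v ∈ link Δ {v} := by
          rw [link, Finset.mem_filter]
          refine ⟨hdelsub (key A hA), ?_, ?_⟩
          · rw [Finset.disjoint_singleton_right]
            exact Finset.notMem_erase v A
          · rw [union_singleton', Finset.insert_erase hvA]
            exact hA
        have h3 : B.erase v ∈ link Δ {v} :=
          hlinkclosed _ h2 _ (Finset.erase_subset_erase v hB)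
        rw [link, Finset.mem_filter] at h3
        have h4 := h3.2.2
        rwa [union_singleton', Finset.insert_erase hvB] at h4
      · have hBsub : B ⊆ A.erase v := Finset.subset_erase.mpr ⟨hB, hvB⟩
        exact hdelsub (hdelclosed _ (key A hA) _ hBsub)

/-- Purity: every face has at most `m` elements and is contained in a face
with exactly `m` elements. -/
def PureC (m : ℕ) (Δ : Finset (Finset α)) : Prop :=
  ∀ A ∈ Δ, A.card ≤ m ∧ ∃ B ∈ Δ, A ⊆ B ∧ B.card = m

variable (F : Type) [Field F]

theorem vd_homologyVanishes {Δ : Finset (Finset α)} (hVD : VertexDecomposable Δ) :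
    ∀ (m : ℕ), PureC m Δ → ∀ i : ℤ, i < (m : ℤ) - 1 → HomologyVanishes F Δ i := by
  induction hVD with
  | simplex A₀ =>
      intro m hpure i hi x hxsupp hxcyc
      by_cases hA0 : A₀ = ∅
      · subst hA0
        obtain ⟨-, B, hB, hBsub, hBcard⟩ := hpure ∅ (Finset.empty_mem_powerset ∅)
        have hB0 : B = ∅ := Finset.mem_powerset.mp hB |> Finset.subset_empty.mp
        have hm0 : m = 0 := by rw [← hBcard, hB0, Finset.card_empty]
        have hx0 : x = 0 := by
          rw [← Finsupp.support_eq_empty]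
          apply Finset.eq_empty_of_forall_notMem
          intro B hBs
          have h1 := (hxsupp B hBs).2
          have h2 : (0:ℤ) ≤ (B.card : ℤ) := Int.natCast_nonneg _
          omega
        exact ⟨0, fun A hA => absurd hA (by simp), by rw [map_zero, hx0]⟩
      · have hA0ne : A₀.Nonempty := Finset.nonempty_of_ne_empty hA0
        set a := A₀.min' hA0ne with ha
        have haA : a ∈ A₀ := A₀.min'_mem hA0ne
        obtain ⟨hsep1, -⟩ := cycle_separation F a x hxcyc
        set c := Finsupp.filter (fun A => a ∉ A) x with hcdef
        refine ⟨cone F a c, ?_, ?_⟩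
        · intro B hBs
          obtain ⟨haB, hBe⟩ := cone_support F a c hBs
          rw [hcdef, Finsupp.support_filter, Finset.mem_filter] at hBe
          obtain ⟨hmem, hcard⟩ := hxsupp _ hBe.1
          constructor
          · rw [Finset.mem_powerset]
            intro b hb
            rcases Finset.mem_insert.mp ((Finset.insert_erase haB) ▸ hb) with h | h
            · exact h ▸ haA
            · exact Finset.mem_powerset.mp hmem h
          · have := Finset.card_erase_add_one haB
            push_cast at hcard ⊢
            omega
        · have hch : bd F (cone F a c) = c - cone F a (bd F c) :=
            eq_sub_of_add_eq (bd_cone_add_cone_bd F a c)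
          have hbdc : bd F c = -(delink F a x) := eq_neg_of_add_eq_zero_left hsep1
          rw [hch, hbdc, map_neg, sub_neg_eq_add]
          exact (decomp F a x).symm
  | shed Δ v hshed hdel hlink IHdel IHlink =>
      intro m hpure i hi x hxsupp hxcyc
      have hCl : IsComplex Δ := vd_isComplex (VertexDecomposable.shed Δ v hshed hdel hlink)
      have hClink : IsComplex (link Δ {v}) := vd_isComplex hlink
      have hv1 : {v} ∈ Δ := by
        obtain ⟨⟨A, hA⟩, hclosed⟩ := hClink
        have h0 : ∅ ∈ link Δ {v} := hclosed A hA ∅ (Finset.empty_subset A)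
        rw [link, Finset.mem_filter] at h0
        have := h0.2.2
        rwa [Finset.empty_union] at this
      have hm1 : 1 ≤ m := by
        have := (hpure {v} hv1).1
        simpa using this
      have hpdel : PureC m (del Δ v) := by
        intro A hA
        rw [del, Finset.mem_filter] at hA
        obtain ⟨hAΔ, hvA⟩ := hA
        obtain ⟨hcard, B, hB, hAB, hBcard⟩ := hpure A hAΔ
        refine ⟨hcard, ?_⟩
        by_cases hvB : v ∈ B
        · obtain ⟨w, hwv, hwB, hwin⟩ := hshed B hB hvB
          refine ⟨insert w (B.erase v), ?_, ?_, ?_⟩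
          · rw [del, Finset.mem_filter]
            refine ⟨hwin, ?_⟩
            simp only [Finset.mem_insert, not_or]
            exact ⟨fun h => hwv h.symm, Finset.notMem_erase v B⟩
          · exact (Finset.subset_erase.mpr ⟨hAB, hvA⟩).trans (Finset.subset_insert _ _)
          · rw [Finset.card_insert_of_notMem (fun h => hwB (Finset.mem_of_mem_erase h)),
              Finset.card_erase_of_mem hvB, hBcard]
            omega
        · exact ⟨B, Finset.mem_filter.mpr ⟨hB, hvB⟩, hAB, hBcard⟩
      have hplink : PureC (m-1) (link Δ {v}) := by
        intro A hA
        rw [link, Finset.mem_filter] at hA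
        obtain ⟨hAΔ, hdisj, hunion⟩ := hA
        have hvA : v ∉ A := Finset.disjoint_singleton_right.mp hdisj
        have hAv : insert v A ∈ Δ := by rwa [union_singleton'] at hunion
        obtain ⟨hcard2, B, hB, hsub, hBcard⟩ := hpure (insert v A) hAv
        have hvB : v ∈ B := hsub (Finset.mem_insert_self v A)
        have hAcard : A.card ≤ m - 1 := by
          rw [Finset.card_insert_of_notMem hvA] at hcard2
          omega
        refine ⟨hAcard, B.erase v, ?_, ?_, ?_⟩
        · rw [link, Finset.mem_filter]
          refine ⟨hCl.2 B hB _ (Finset.erase_subset v B), ?_, ?_⟩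
          · rw [Finset.disjoint_singleton_right]
            exact Finset.notMem_erase v B
          · rw [union_singleton', Finset.insert_erase hvB]
            exact hB
        · exact Finset.subset_erase.mpr ⟨(Finset.subset_insert v A).trans hsub, hvA⟩
        · rw [Finset.card_erase_of_mem hvB, hBcard]
      obtain ⟨hsep1, hsep2⟩ := cycle_separation F v x hxcyc
      set w := delink F v x with hwdef
      set c := Finsupp.filter (fun A => v ∉ A) x with hcdef
      have hwsupp : ∀ B ∈ w.support, B ∈ link Δ {v} ∧ (B.card : ℤ) = (i-1) + 1 := by
        intro B hB
        have hBval := Finsupp.mem_support_iff.mp hB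
        rw [hwdef, delink_apply] at hBval
        by_cases hvB : v ∈ B
        · rw [if_pos hvB] at hBval
          exact absurd rfl hBval
        · rw [if_neg hvB] at hBval
          have hx2 : x (insert v B) ≠ 0 := fun h => hBval (by rw [h, mul_zero])
          obtain ⟨hmem, hcard⟩ := hxsupp (insert v B) (Finsupp.mem_support_iff.mpr hx2)
          constructor
          · rw [link, Finset.mem_filter]
            refine ⟨hCl.2 _ hmem B (Finset.subset_insert v B),
              Finset.disjoint_singleton_right.mpr hvB, ?_⟩
            rw [union_singleton']
            exact hmem
          · rw [Finset.card_insert_of_notMem hvB] at hcard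
            push_cast at hcard ⊢
            omega
      have hilt : i - 1 < ((m-1 : ℕ) : ℤ) - 1 := by
        have : ((m-1 : ℕ) : ℤ) = (m : ℤ) - 1 := by
          push_cast [hm1]
          omega
        omega
      obtain ⟨u, husupp, hubd⟩ := IHlink (m-1) hplink (i-1) hilt w hwsupp hsep2
      have hbdz : bd F (c + u) = 0 := by
        rw [map_add, hubd]
        exact hsep1
      have hzsupp : ∀ A ∈ (c+u).support, A ∈ del Δ v ∧ (A.card:ℤ) = i+1 := by
        intro A hA
        rcases Finset.mem_union.mp (Finsupp.support_add hA) with h | h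
        · rw [hcdef, Finsupp.support_filter, Finset.mem_filter] at h
          obtain ⟨hxA, hvA⟩ := h
          obtain ⟨hmem, hcard⟩ := hxsupp A hxA
          exact ⟨Finset.mem_filter.mpr ⟨hmem, hvA⟩, hcard⟩
        · obtain ⟨hlinkmem, hcard⟩ := husupp A h
          rw [link, Finset.mem_filter] at hlinkmem
          refine ⟨Finset.mem_filter.mpr
            ⟨hlinkmem.1, Finset.disjoint_singleton_right.mp hlinkmem.2.1⟩, by omega⟩
      obtain ⟨y', hy'supp, hy'bd⟩ := IHdel m hpdel i hi (c+u) hzsupp hbdz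
      refine ⟨y' - cone F v u, ?_, ?_⟩
      · intro A hA
        rcases Finset.mem_union.mp (Finsupp.support_sub hA) with h | h
        · obtain ⟨hmem, hcard⟩ := hy'supp A h
          exact ⟨Finset.mem_of_mem_filter A hmem, hcard⟩
        · obtain ⟨hvA, hAe⟩ := cone_support F v u h
          obtain ⟨hlinkmem, hcard⟩ := husupp _ hAe
          rw [link, Finset.mem_filter] at hlinkmem
          have h5 := hlinkmem.2.2
          rw [union_singleton', Finset.insert_erase hvA] at h5
          refine ⟨h5, ?_⟩
          have := Finset.card_erase_add_one hvA
          push_cast at hcard ⊢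
          omega
      · rw [map_sub, hy'bd]
        have hch : bd F (cone F v u) = u - cone F v (bd F u) :=
          eq_sub_of_add_eq (bd_cone_add_cone_bd F v u)
        rw [hch, hubd]
        have hstep : c + u - (u - cone F v w) = c + cone F v w := by abel
        rw [hstep, hcdef, hwdef]
        exact (decomp F v x).symm

end VDComplex
section Graph

variable {n : ℕ} (G : SimpleGraph (Fin n)) [DecidableRel G.Adj]

/-- The number of connected components of the subgraph induced on `V`. -/
noncomputable def compCount (V : Finset (Fin n)) : ℕ :=
  Nat.card (G.induce (V : Set (Fin n))).ConnectedComponent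

/-- Inclusion homomorphism between induced subgraphs. -/
def inclHom {V W : Finset (Fin n)} (h : V ⊆ W) :
    G.induce (V : Set (Fin n)) →g G.induce (W : Set (Fin n)) where
  toFun x := ⟨x.1, Finset.mem_coe.mpr (h (Finset.mem_coe.mp x.2))⟩
  map_rel' := fun hab => hab

omit [DecidableRel G.Adj] in
lemma same_comp_of_adj (V : Finset (Fin n)) {u w : Fin n} (hu : u ∈ V) (hw : w ∈ V)
    (hadj : G.Adj u w) :
    (G.induce (V : Set (Fin n))).connectedComponentMk ⟨u, Finset.mem_coe.mpr hu⟩ =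
      (G.induce (V : Set (Fin n))).connectedComponentMk ⟨w, Finset.mem_coe.mpr hw⟩ :=
  SimpleGraph.ConnectedComponent.eq.mpr (SimpleGraph.Adj.reachable hadj)

omit [DecidableRel G.Adj] in
lemma exists_untouched_comp (V S : Finset (Fin n)) (hS : S ⊆ V)
    (hcard : S.card < compCount G V) :
    ∃ (w : Fin n) (hw : w ∈ V), ∀ s (hs : s ∈ S),
      (G.induce (V : Set (Fin n))).connectedComponentMk
          ⟨s, Finset.mem_coe.mpr (hS hs)⟩ ≠
        (G.induce (V : Set (Fin n))).connectedComponentMk ⟨w, Finset.mem_coe.mpr hw⟩ := by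
  by_contra hcon
  push_neg at hcon
  have hsurj : Function.Surjective (fun s : {x // x ∈ S} =>
      (G.induce (V : Set (Fin n))).connectedComponentMk
        ⟨s.1, Finset.mem_coe.mpr (hS s.2)⟩) := by
    intro K
    obtain ⟨x, hx⟩ := K.exists_rep
    have hxV : x.1 ∈ V := Finset.mem_coe.mp x.2
    obtain ⟨s, hs, heq⟩ := hcon x.1 hxV
    exact ⟨⟨s, hs⟩, heq.trans hx⟩
  have hle := Nat.card_le_card_of_surjective _ hsurj
  rw [Nat.card_eq_finsetCard] at hle
  exact absurd hle (by rw [compCount] at hcard; omega)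

omit [DecidableRel G.Adj] in
lemma compCount_le_erase (V : Finset (Fin n)) {v u : Fin n} (hv : v ∈ V) (hu : u ∈ V)
    (hadj : G.Adj v u) : compCount G V ≤ compCount G (V.erase v) := by
  have hsub : V.erase v ⊆ V := Finset.erase_subset v V
  apply Nat.card_le_card_of_surjective
    (SimpleGraph.ConnectedComponent.map (inclHom G hsub))
  intro K
  obtain ⟨x, hx⟩ := K.exists_rep
  have hxV : x.1 ∈ V := Finset.mem_coe.mp x.2
  by_cases hxv : x.1 = v
  · have hne : u ≠ v := fun h => (G.ne_of_adj hadj) h.symm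
    have huv : u ∈ V.erase v := Finset.mem_erase.mpr ⟨hne, hu⟩
    refine ⟨(G.induce ((V.erase v : Finset (Fin n)) : Set (Fin n))).connectedComponentMk
      ⟨u, Finset.mem_coe.mpr huv⟩, ?_⟩
    rw [SimpleGraph.ConnectedComponent.map_mk]
    refine Eq.trans ?_ hx
    exact same_comp_of_adj G V hu hxV (by rw [hxv]; exact hadj.symm)
  · have hxe : x.1 ∈ V.erase v := Finset.mem_erase.mpr ⟨hxv, hxV⟩
    refine ⟨(G.induce ((V.erase v : Finset (Fin n)) : Set (Fin n))).connectedComponentMk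
      ⟨x.1, Finset.mem_coe.mpr hxe⟩, ?_⟩
    rw [SimpleGraph.ConnectedComponent.map_mk]
    exact hx

omit [DecidableRel G.Adj] in
lemma compCount_deleteNbhd (V : Finset (Fin n)) {v : Fin n} (hv : v ∈ V)
    [DecidablePred fun u => ¬(u = v ∨ G.Adj v u)] :
    compCount G V - 1 ≤ compCount G (V.filter fun u => ¬(u = v ∨ G.Adj v u)) := by
  set V' := V.filter fun u => ¬(u = v ∨ G.Adj v u) with hV'
  have hsub : V' ⊆ V := Finset.filter_subset _ _
  have hsurj : Function.Surjective (fun z :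
      (G.induce (V' : Set (Fin n))).ConnectedComponent ⊕ Unit =>
        match z with
        | Sum.inl K => SimpleGraph.ConnectedComponent.map (inclHom G hsub) K
        | Sum.inr _ => (G.induce (V : Set (Fin n))).connectedComponentMk
            ⟨v, Finset.mem_coe.mpr hv⟩) := by
    intro K
    by_cases hK : K = (G.induce (V : Set (Fin n))).connectedComponentMk
        ⟨v, Finset.mem_coe.mpr hv⟩
    · exact ⟨Sum.inr Unit.unit, hK.symm⟩
    · obtain ⟨x, hx⟩ := K.exists_rep
      have hxV : x.1 ∈ V := Finset.mem_coe.mp x.2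
      have hxv : x.1 ≠ v := by
        intro h
        exact hK (hx.symm.trans
          (congrArg (G.induce (V : Set (Fin n))).connectedComponentMk (Subtype.ext h)))
      have hxadj : ¬ G.Adj v x.1 := by
        intro h
        exact hK (hx.symm.trans (same_comp_of_adj G V hxV hv h.symm))
      have hxm : x.1 ∈ V' := by
        rw [hV', Finset.mem_filter]
        exact ⟨hxV, by push_neg; exact ⟨hxv, hxadj⟩⟩
      refine ⟨Sum.inl ((G.induce (V' : Set (Fin n))).connectedComponentMk
        ⟨x.1, Finset.mem_coe.mpr hxm⟩), ?_⟩
      show SimpleGraph.ConnectedComponent.map (inclHom G hsub) _ = K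
      rw [SimpleGraph.ConnectedComponent.map_mk]
      exact hx
  have hle := Nat.card_le_card_of_surjective _ hsurj
  have hu1 : Nat.card Unit = 1 := Nat.card_unique
  rw [Nat.card_sum, hu1] at hle
  rw [compCount, compCount]
  omega

omit [DecidableRel G.Adj] in
lemma compCount_edgeless (V : Finset (Fin n))
    (h : ∀ a ∈ V, ∀ b ∈ V, ¬ G.Adj a b) : compCount G V = V.card := by
  rw [compCount, ← Nat.card_eq_finsetCard]
  symm
  have key : ∀ a b : (V : Set (Fin n)), (G.induce (V : Set (Fin n))).Reachable a b → a = b := by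
    intro a b hr
    obtain ⟨p⟩ := hr
    cases p with
    | nil => rfl
    | @cons _ c _ hadj p =>
        exact absurd hadj (h _ (Finset.mem_coe.mp a.2) _ (Finset.mem_coe.mp c.2))
  apply Nat.card_eq_of_bijective (fun x : {y // y ∈ V} =>
    (G.induce (V : Set (Fin n))).connectedComponentMk ⟨x.1, Finset.mem_coe.mpr x.2⟩)
  constructor
  · intro x y hxy
    have h1 := key _ _ (SimpleGraph.ConnectedComponent.eq.mp hxy)
    exact Subtype.ext (congrArg Subtype.val h1)
  · intro K
    obtain ⟨x, hx⟩ := K.exists_rep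
    exact ⟨⟨x.1, Finset.mem_coe.mp x.2⟩, hx⟩

lemma compCount_univ : compCount G Finset.univ = Nat.card G.ConnectedComponent := by
  apply le_antisymm
  · apply Nat.card_le_card_of_surjective (SimpleGraph.ConnectedComponent.map
      (⟨fun x => ⟨x, by simp⟩, fun hab => hab⟩ :
        G →g G.induce ((Finset.univ : Finset (Fin n)) : Set (Fin n))))
    intro K
    obtain ⟨x, hx⟩ := K.exists_rep
    refine ⟨G.connectedComponentMk x.1, ?_⟩
    rw [SimpleGraph.ConnectedComponent.map_mk]
    exact hx
  · apply Nat.card_le_card_of_surjective (SimpleGraph.ConnectedComponent.map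
      (⟨fun x => x.1, fun hab => hab⟩ :
        G.induce ((Finset.univ : Finset (Fin n)) : Set (Fin n)) →g G))
    intro K
    obtain ⟨x, hx⟩ := K.exists_rep
    refine ⟨(G.induce ((Finset.univ : Finset (Fin n)) : Set (Fin n))).connectedComponentMk
      ⟨x, by simp⟩, ?_⟩
    rw [SimpleGraph.ConnectedComponent.map_mk]
    exact hx

end Graph
section IndSets

variable {n : ℕ} (G : SimpleGraph (Fin n)) [DecidableRel G.Adj]

/-- Independent subsets of `V` of size at most `k`. -/
def IndSets (V : Finset (Fin n)) (k : ℕ) : Finset (Finset (Fin n)) :=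
  V.powerset.filter fun A => (∀ a ∈ A, ∀ b ∈ A, ¬ G.Adj a b) ∧ A.card ≤ k

lemma mem_indSets {V : Finset (Fin n)} {k : ℕ} {A : Finset (Fin n)} :
    A ∈ IndSets G V k ↔ A ⊆ V ∧ (∀ a ∈ A, ∀ b ∈ A, ¬ G.Adj a b) ∧ A.card ≤ k := by
  rw [IndSets, Finset.mem_filter, Finset.mem_powerset]

lemma indSets_zero (V : Finset (Fin n)) :
    IndSets G V 0 = (∅ : Finset (Fin n)).powerset := by
  ext A
  rw [mem_indSets, Finset.mem_powerset, Finset.subset_empty]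
  constructor
  · rintro ⟨-, -, hc⟩
    exact Finset.card_eq_zero.mp (Nat.le_zero.mp hc)
  · rintro rfl
    simp

lemma del_indSets (V : Finset (Fin n)) (k : ℕ) (v : Fin n) :
    del (IndSets G V k) v = IndSets G (V.erase v) k := by
  ext A
  rw [del, Finset.mem_filter, mem_indSets, mem_indSets]
  constructor
  · rintro ⟨⟨hAV, hind, hc⟩, hv⟩
    exact ⟨Finset.subset_erase.mpr ⟨hAV, hv⟩, hind, hc⟩
  · rintro ⟨hAV, hind, hc⟩
    obtain ⟨h1, h2⟩ := Finset.subset_erase.mp hAV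
    exact ⟨⟨h1, hind, hc⟩, h2⟩

lemma link_indSets (V : Finset (Fin n)) (k : ℕ) (v : Fin n) (hv : v ∈ V) (hk : 1 ≤ k) :
    link (IndSets G V k) {v}
      = IndSets G (V.filter fun u => ¬(u = v ∨ G.Adj v u)) (k-1) := by
  ext A
  rw [link, Finset.mem_filter, mem_indSets, mem_indSets, Finset.disjoint_singleton_right,
    union_singleton']
  constructor
  · rintro ⟨⟨hAV, hind, hc⟩, hvA, hins⟩
    obtain ⟨hiV, hiind, hic⟩ := hins
    rw [mem_indSets]
    refine ⟨?_, hind, ?_⟩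
    · intro u hu
      rw [Finset.mem_filter]
      refine ⟨hAV hu, ?_⟩
      push_neg
      refine ⟨fun h => hvA (h ▸ hu), ?_⟩
      exact hiind v (Finset.mem_insert_self v A) u (Finset.mem_insert_of_mem hu)
    · rw [Finset.card_insert_of_notMem hvA] at hic
      omega
  · intro hmem0
    rw [mem_indSets] at hmem0
    obtain ⟨hAV', hind, hc'⟩ := hmem0
    have hmem : ∀ u ∈ A, u ∈ V ∧ u ≠ v ∧ ¬ G.Adj v u := by
      intro u hu
      have := Finset.mem_filter.mp (hAV' hu)
      push_neg at this
      exact ⟨this.1, this.2.1, this.2.2⟩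
    have hvA : v ∉ A := fun h => (hmem v h).2.1 rfl
    refine ⟨⟨fun u hu => (hmem u hu).1, hind, le_trans hc' (Nat.sub_le _ _)⟩, hvA, ?_⟩
    refine ⟨Finset.insert_subset hv (fun u hu => (hmem u hu).1), ?_, ?_⟩
    · intro a ha b hb
      rcases Finset.mem_insert.mp ha with rfl | ha'
      · rcases Finset.mem_insert.mp hb with rfl | hb'
        · exact G.irrefl
        · exact (hmem b hb').2.2
      · rcases Finset.mem_insert.mp hb with rfl | hb'
        · exact fun h => (hmem a ha').2.2 h.symm
        · exact hind a ha' b hb'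
    · rw [Finset.card_insert_of_notMem hvA]
      omega

lemma link_indSets_face (V : Finset (Fin n)) (k : ℕ) (A : Finset (Fin n))
    (hA : A ∈ IndSets G V k) :
    link (IndSets G V k) A
      = IndSets G (V.filter fun u => u ∉ A ∧ ∀ a ∈ A, ¬ G.Adj a u) (k - A.card) := by
  obtain ⟨hAV, hAind, hAc⟩ := (mem_indSets G).mp hA
  ext F
  rw [link, Finset.mem_filter, mem_indSets, mem_indSets]
  constructor
  · rintro ⟨⟨hFV, hFind, hFc⟩, hdisj, huV, huind, huc⟩
    rw [mem_indSets]
    refine ⟨?_, hFind, ?_⟩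
    · intro u hu
      rw [Finset.mem_filter]
      refine ⟨hFV hu, Finset.disjoint_left.mp hdisj hu, fun a ha => ?_⟩
      exact huind a (Finset.mem_union_right F ha) u (Finset.mem_union_left A hu)
    · have hcard : (F ∪ A).card = F.card + A.card := Finset.card_union_of_disjoint hdisj
      omega
  · intro hmem0
    rw [mem_indSets] at hmem0
    obtain ⟨hFV', hFind, hFc'⟩ := hmem0
    have hFsubV : F ⊆ V := fun u hu => Finset.mem_of_mem_filter u (hFV' hu)
    have hdisj : Disjoint F A :=
      Finset.disjoint_left.mpr fun {u} hu => ((Finset.mem_filter.mp (hFV' hu)).2).1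
    have hcross : ∀ u ∈ F, ∀ a ∈ A, ¬ G.Adj a u :=
      fun u hu => ((Finset.mem_filter.mp (hFV' hu)).2).2
    refine ⟨⟨hFsubV, hFind, le_trans hFc' (Nat.sub_le _ _)⟩, hdisj, ?_⟩
    refine ⟨Finset.union_subset hFsubV hAV, ?_, ?_⟩
    · intro a ha b hb
      rcases Finset.mem_union.mp ha with ha' | ha' <;> rcases Finset.mem_union.mp hb with hb' | hb'
      · exact hFind a ha' b hb'
      · exact fun h => hcross a ha' b hb' h.symm
      · exact hcross b hb' a ha'
      · exact hAind a ha' b hb'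
    · rw [Finset.card_union_of_disjoint hdisj]
      omega

lemma indSets_extend (V : Finset (Fin n)) (k : ℕ) (hk : k ≤ compCount G V) :
    ∀ (d : ℕ) (A : Finset (Fin n)), A ∈ IndSets G V k → A.card + d = k →
      ∃ B ∈ IndSets G V k, A ⊆ B ∧ B.card = k := by
  intro d
  induction d with
  | zero =>
      intro A hA hcard
      exact ⟨A, hA, Finset.Subset.refl A, by omega⟩
  | succ d IH =>
      intro A hA hcard
      obtain ⟨hAV, hind, hc⟩ := (mem_indSets G).mp hA
      have hlt : A.card < compCount G V := by omega
      obtain ⟨w, hw, huntouch⟩ := exists_untouched_comp G V A hAV hlt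
      have hwA : w ∉ A := fun h => huntouch w h rfl
      have hcross : ∀ s ∈ A, ¬ G.Adj s w := by
        intro s hs hadj
        exact huntouch s hs (same_comp_of_adj G V (hAV hs) hw hadj)
      have hins : insert w A ∈ IndSets G V k := by
        rw [mem_indSets]
        refine ⟨Finset.insert_subset hw hAV, ?_, ?_⟩
        · intro a ha b hb
          rcases Finset.mem_insert.mp ha with rfl | ha'
          · rcases Finset.mem_insert.mp hb with rfl | hb'
            · exact G.irrefl
            · exact fun h => hcross b hb' h.symm
          · rcases Finset.mem_insert.mp hb with rfl | hb'
            · exact hcross a ha'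
            · exact hind a ha' b hb'
        · rw [Finset.card_insert_of_notMem hwA]
          omega
      obtain ⟨B, hB, hsub, hBc⟩ := IH (insert w A) hins
        (by rw [Finset.card_insert_of_notMem hwA]; omega)
      exact ⟨B, hB, (Finset.subset_insert w A).trans hsub, hBc⟩

lemma indSets_pure (V : Finset (Fin n)) (k : ℕ) (hk : k ≤ compCount G V) :
    PureC k (IndSets G V k) := by
  intro A hA
  have hc := ((mem_indSets G).mp hA).2.2
  exact ⟨hc, indSets_extend G V k hk (k - A.card) A hA (by omega)⟩

theorem indSets_vd_aux (N : ℕ) : ∀ (V : Finset (Fin n)) (k : ℕ), V.card ≤ N →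
    k ≤ compCount G V → VertexDecomposable (IndSets G V k) := by
  induction N with
  | zero =>
      intro V k hcard hk
      have hV : V = ∅ := Finset.card_eq_zero.mp (Nat.le_zero.mp hcard)
      have hc0 : compCount G V = 0 := by
        rw [compCount_edgeless G V (by subst hV; simp), hV, Finset.card_empty]
      have hk0 : k = 0 := by omega
      rw [hk0, indSets_zero]
      exact VertexDecomposable.simplex ∅
  | succ N IH =>
      intro V k hcard hk
      rcases Nat.eq_zero_or_pos k with hk0 | hk1
      · rw [hk0, indSets_zero]
        exact VertexDecomposable.simplex ∅
      by_cases hedge : ∃ v ∈ V, ∃ u ∈ V, G.Adj v u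
      · obtain ⟨v, hv, u, hu, hadj⟩ := hedge
        apply VertexDecomposable.shed _ v
        · -- shedding condition
          intro A hAmem hvA
          obtain ⟨hAV, hind, hc⟩ := (mem_indSets G).mp hAmem
          have hScard : (A.erase v).card < compCount G V := by
            rw [Finset.card_erase_of_mem hvA]
            have : 1 ≤ A.card := Finset.card_pos.mpr ⟨v, hvA⟩
            omega
          have hSV : A.erase v ⊆ V := (Finset.erase_subset v A).trans hAV
          obtain ⟨w', hw', huntouch⟩ := exists_untouched_comp G V (A.erase v) hSV hScard
          by_cases hwv : w' = v
          · -- the untouched component is that of `v`: use its neighbour `u`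
            have hadj' : G.Adj w' u := by rw [hwv]; exact hadj
            have huA : u ∉ A := fun h => hind v hvA u h hadj
            refine ⟨u, hadj.ne', huA, ?_⟩
            rw [mem_indSets]
            have huS : u ∉ A.erase v := fun h => huA (Finset.mem_of_mem_erase h)
            refine ⟨Finset.insert_subset hu hSV, ?_, ?_⟩
            · have hcross : ∀ s ∈ A.erase v, ¬ G.Adj s u := by
                intro s hs hadj2
                apply huntouch s hs
                rw [same_comp_of_adj G V (hSV hs) hu hadj2]
                exact (same_comp_of_adj G V hu hw' hadj'.symm)
              intro a ha b hb
              rcases Finset.mem_insert.mp ha with rfl | ha'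
              · rcases Finset.mem_insert.mp hb with rfl | hb'
                · exact G.irrefl
                · exact fun h => hcross b hb' h.symm
              · rcases Finset.mem_insert.mp hb with rfl | hb'
                · exact hcross a ha'
                · exact hind a (Finset.mem_of_mem_erase ha') b (Finset.mem_of_mem_erase hb')
            · rw [Finset.card_insert_of_notMem huS, Finset.card_erase_of_mem hvA]
              omega
          · refine ⟨w', hwv, ?_, ?_⟩
            · intro h
              exact huntouch w' (Finset.mem_erase.mpr ⟨hwv, h⟩) rfl
            · rw [mem_indSets]
              have hwS : w' ∉ A.erase v := fun h => huntouch w' h rfl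
              have hcross : ∀ s ∈ A.erase v, ¬ G.Adj s w' := by
                intro s hs hadj2
                exact huntouch s hs (same_comp_of_adj G V (hSV hs) hw' hadj2)
              refine ⟨Finset.insert_subset hw' hSV, ?_, ?_⟩
              · intro a ha b hb
                rcases Finset.mem_insert.mp ha with rfl | ha'
                · rcases Finset.mem_insert.mp hb with rfl | hb'
                  · exact G.irrefl
                  · exact fun h => hcross b hb' h.symm
                · rcases Finset.mem_insert.mp hb with rfl | hb'
                  · exact hcross a ha'
                  · exact hind a (Finset.mem_of_mem_erase ha') b (Finset.mem_of_mem_erase hb')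
              · rw [Finset.card_insert_of_notMem hwS, Finset.card_erase_of_mem hvA]
                omega
        · rw [del_indSets]
          apply IH
          · have h1 : 1 ≤ V.card := Finset.card_pos.mpr ⟨v, hv⟩
            rw [Finset.card_erase_of_mem hv]
            omega
          · exact le_trans hk (compCount_le_erase G V hv hu hadj)
        · rw [link_indSets G V k v hv hk1]
          apply IH
          · have hsub : V.filter (fun u => ¬(u = v ∨ G.Adj v u)) ⊆ V.erase v := by
              intro a ha
              rw [Finset.mem_filter] at ha
              push_neg at ha
              exact Finset.mem_erase.mpr ⟨ha.2.1, ha.1⟩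
            have h1 : 1 ≤ V.card := Finset.card_pos.mpr ⟨v, hv⟩
            have h2 := Finset.card_le_card hsub
            rw [Finset.card_erase_of_mem hv] at h2
            omega
          · have h3 := compCount_deleteNbhd G V hv
            omega
      · push_neg at hedge
        by_cases hkV : V.card ≤ k
        · have heq : IndSets G V k = V.powerset := by
            ext A
            rw [mem_indSets, Finset.mem_powerset]
            constructor
            · exact fun h => h.1
            · intro hAV
              exact ⟨hAV, fun a ha b hb => hedge a (hAV ha) b (hAV hb),
                le_trans (Finset.card_le_card hAV) hkV⟩
          rw [heq]
          exact VertexDecomposable.simplex V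
        · push_neg at hkV
          have hVne : V.Nonempty := Finset.card_pos.mp (by omega)
          obtain ⟨v, hv⟩ := hVne
          apply VertexDecomposable.shed _ v
          · intro A hAmem hvA
            obtain ⟨hAV, hind, hc⟩ := (mem_indSets G).mp hAmem
            have hns : ¬ V ⊆ A := fun h => absurd (Finset.card_le_card h) (by omega)
            obtain ⟨w, hwV, hwA⟩ := Finset.not_subset.mp hns
            have hwv : w ≠ v := fun h => hwA (h ▸ hvA)
            refine ⟨w, hwv, hwA, ?_⟩
            rw [mem_indSets]
            have hSV : A.erase v ⊆ V := (Finset.erase_subset v A).trans hAV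
            have hwS : w ∉ A.erase v := fun h => hwA (Finset.mem_of_mem_erase h)
            refine ⟨Finset.insert_subset hwV hSV, ?_, ?_⟩
            · intro a ha b hb
              have haV : a ∈ V := (Finset.insert_subset hwV hSV) ha
              have hbV : b ∈ V := (Finset.insert_subset hwV hSV) hb
              exact hedge a haV b hbV
            · rw [Finset.card_insert_of_notMem hwS, Finset.card_erase_of_mem hvA]
              omega
          · rw [del_indSets]
            apply IH
            · have h1 : 1 ≤ V.card := Finset.card_pos.mpr ⟨v, hv⟩
              rw [Finset.card_erase_of_mem hv]
              omega
            · have hsub : V.erase v ⊆ V := Finset.erase_subset v V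
              rw [compCount_edgeless G (V.erase v)
                (fun a ha b hb => hedge a (hsub ha) b (hsub hb)),
                Finset.card_erase_of_mem hv]
              omega
          · rw [link_indSets G V k v hv hk1]
            set V' := V.filter (fun u => ¬(u = v ∨ G.Adj v u)) with hV'
            have hsub : V' ⊆ V := Finset.filter_subset _ _
            have hsup : V.erase v ⊆ V' := by
              intro a ha
              obtain ⟨hav, haV⟩ := Finset.mem_erase.mp ha
              rw [hV', Finset.mem_filter]
              push_neg
              exact ⟨haV, hav, hedge v hv a haV⟩
            apply IH
            · have hsub2 : V' ⊆ V.erase v := by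
                intro a ha
                rw [hV', Finset.mem_filter] at ha
                push_neg at ha
                exact Finset.mem_erase.mpr ⟨ha.2.1, ha.1⟩
              have h1 : 1 ≤ V.card := Finset.card_pos.mpr ⟨v, hv⟩
              have h2 := Finset.card_le_card hsub2
              rw [Finset.card_erase_of_mem hv] at h2
              omega
            · rw [compCount_edgeless G V' (fun a ha b hb => hedge a (hsub ha) b (hsub hb))]
              have h2 := Finset.card_le_card hsup
              rw [Finset.card_erase_of_mem hv] at h2
              omega

theorem indSets_vd (V : Finset (Fin n)) (k : ℕ) (hk : k ≤ compCount G V) :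
    VertexDecomposable (IndSets G V k) :=
  indSets_vd_aux G V.card V k le_rfl hk

end IndSets
section Assembly

variable {n : ℕ} (G : SimpleGraph (Fin n)) [DecidableRel G.Adj]

lemma link_inst_irrel {α : Type} {i1 : DecidableEq α} [i2 : DecidableEq α]
    (Δ : Finset (Finset α)) (S : Finset α) :
    @link α i1 Δ S = @link α i2 Δ S := by
  have h : i1 = i2 := by
    funext a b
    exact Subsingleton.elim _ _
  cases h
  rfl

lemma vd_cast {α : Type} {i1 i2 : DecidableEq α} {Δ : Finset (Finset α)}
    (h : @VertexDecomposable α i1 Δ) : @VertexDecomposable α i2 Δ := by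
  have heq : i1 = i2 := by
    funext a b
    exact Subsingleton.elim _ _
  exact heq ▸ h

lemma mem_indComplex {A : Finset (Fin n)} :
    A ∈ indComplex n G ↔ ∀ a ∈ A, ∀ b ∈ A, ¬ G.Adj a b := by
  rw [indComplex, Finset.mem_filter, Finset.mem_powerset]
  exact ⟨fun h => h.2, fun h => ⟨Finset.subset_univ A, h⟩⟩

lemma skeleton_indComplex (r : ℕ) :
    skeleton (indComplex n G) ((r : ℤ) - 1) = IndSets G Finset.univ r := by
  ext A
  rw [skeleton, Finset.mem_filter, mem_indSets]
  have hiff : ((A.card : ℤ) ≤ (r : ℤ) - 1 + 1) ↔ A.card ≤ r := by omega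
  rw [hiff, mem_indComplex]
  constructor
  · rintro ⟨h1, h2⟩
    exact ⟨Finset.subset_univ A, h1, h2⟩
  · rintro ⟨-, h1, h2⟩
    exact ⟨h1, h2⟩

lemma compCount_remove_nbhds (V : Finset (Fin n)) :
    ∀ (A : Finset (Fin n)), A ⊆ V → (∀ a ∈ A, ∀ b ∈ A, ¬ G.Adj a b) →
      compCount G V - A.card ≤
        compCount G (V.filter fun u => u ∉ A ∧ ∀ a ∈ A, ¬ G.Adj a u) := by
  intro A
  induction A using Finset.induction_on with
  | empty =>
      intro _ _
      have heq : (V.filter fun u => u ∉ (∅ : Finset (Fin n)) ∧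
          ∀ a ∈ (∅ : Finset (Fin n)), ¬ G.Adj a u) = V := by
        apply Finset.filter_true_of_mem
        intro u _
        simp
      rw [heq]
      simp
  | @insert a A ha IH =>
      intro hsub hind
      have hAsub : A ⊆ V := (Finset.subset_insert a A).trans hsub
      have hAind : ∀ x ∈ A, ∀ b ∈ A, ¬ G.Adj x b := fun x hx b hb =>
        hind x (Finset.mem_insert_of_mem hx) b (Finset.mem_insert_of_mem hb)
      have hIH := IH hAsub hAind
      set W := V.filter (fun u => u ∉ A ∧ ∀ x ∈ A, ¬ G.Adj x u) with hW
      have haW : a ∈ W := by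
        rw [hW, Finset.mem_filter]
        exact ⟨hsub (Finset.mem_insert_self a A), ha,
          fun x hx => hind x (Finset.mem_insert_of_mem hx) a (Finset.mem_insert_self a A)⟩
      have heq : (V.filter fun u => u ∉ insert a A ∧ ∀ x ∈ insert a A, ¬ G.Adj x u)
          = W.filter fun u => ¬(u = a ∨ G.Adj a u) := by
        ext u
        rw [Finset.mem_filter, hW, Finset.mem_filter, Finset.mem_filter]
        simp only [Finset.mem_insert, not_or, forall_eq_or_imp]
        tauto
      rw [heq]
      have hstep := compCount_deleteNbhd G W haW
      rw [Finset.card_insert_of_notMem ha]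
      omega

lemma indSets_dim (V : Finset (Fin n)) (k : ℕ) (hk : k ≤ compCount G V) :
    dimC (IndSets G V k) = (k : ℤ) - 1 := by
  have h0 : ∅ ∈ IndSets G V k := by
    rw [mem_indSets]
    simp
  obtain ⟨B, hB, -, hBc⟩ := indSets_extend G V k hk k ∅ h0 (by simp)
  have hsup : (IndSets G V k).sup Finset.card = k := by
    apply le_antisymm
    · apply Finset.sup_le
      intro A hA
      exact ((mem_indSets G).mp hA).2.2
    · calc k = B.card := hBc.symm
        _ ≤ _ := Finset.le_sup hB
  rw [dimC, hsup]

theorem indComplex_skeleton_vd_full (r : ℕ) (hr : Nat.card G.ConnectedComponent = r) :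
    VertexDecomposable (skeleton (indComplex n G) ((r : ℤ) - 1)) ∧
      ∀ (F : Type) [Field F], depthC F (indComplex n G) ≥ (r : ℤ) - 1 := by
  have hcomp : compCount G Finset.univ = r := by rw [compCount_univ, hr]
  constructor
  · rw [skeleton_indComplex]
    exact indSets_vd G Finset.univ r (le_of_eq hcomp.symm)
  · intro F _
    -- the witness face of size r
    have h0 : ∅ ∈ IndSets G Finset.univ r := by
      rw [mem_indSets]
      simp
    obtain ⟨B, hB, -, hBc⟩ := indSets_extend G Finset.univ r (le_of_eq hcomp.symm) r ∅ h0
      (by simp)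
    have hBind : B ∈ indComplex n G := by
      rw [mem_indComplex]
      exact ((mem_indSets G).mp hB).2.1
    have hdim : (r : ℤ) - 1 ≤ dimC (indComplex n G) := by
      rw [dimC]
      have : r ≤ (indComplex n G).sup Finset.card := by
        calc r = B.card := hBc.symm
          _ ≤ _ := Finset.le_sup hBind
      omega
    have hCM : IsCM F (skeleton (indComplex n G) ((r : ℤ) - 1)) := by
      rw [skeleton_indComplex]
      intro A hA i hi
      rw [link_inst_irrel] at hi ⊢
      rw [link_indSets_face G Finset.univ r A hA] at hi ⊢
      have hAsub : A ⊆ Finset.univ := Finset.subset_univ A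
      have hAind := ((mem_indSets G).mp hA).2.1
      have hk'' : r - A.card ≤ compCount G
          (Finset.univ.filter fun u => u ∉ A ∧ ∀ a ∈ A, ¬ G.Adj a u) := by
        have := compCount_remove_nbhds G Finset.univ A hAsub hAind
        omega
      have hdim2 := indSets_dim G _ _ hk''
      rw [hdim2] at hi
      exact vd_homologyVanishes F (vd_cast (indSets_vd G _ _ hk'')) (r - A.card)
        (indSets_pure G _ _ hk'') i hi
    have hmem : (r : ℤ) - 1 ∈ {d : ℤ | d ≤ dimC (indComplex n G) ∧
        IsCM F (skeleton (indComplex n G) d)} := ⟨hdim, hCM⟩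
    have hbdd : BddAbove {d : ℤ | d ≤ dimC (indComplex n G) ∧
        IsCM F (skeleton (indComplex n G) d)} :=
      ⟨dimC (indComplex n G), fun d hd => hd.1⟩
    exact le_csSup hbdd hmem

end Assembly

/-- **Skeleta of independence complexes of graphs with many components.** If `G`
is a graph with `r` connected components, then the `(r-1)`-dimensional skeleton
of the independence complex of `G` is vertex-decomposable; consequently
`depth(Ind(G)) ≥ r - 1` over every field. -/
theorem indComplex_skeleton_vertexDecomposable (n : ℕ) (G : SimpleGraph (Fin n))
    [DecidableRel G.Adj] (r : ℕ) (hr : Nat.card G.ConnectedComponent = r) :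
    VertexDecomposable (skeleton (indComplex n G) ((r : ℤ) - 1)) ∧
      ∀ (F : Type) [Field F], depthC F (indComplex n G) ≥ (r : ℤ) - 1 := by
  exact indComplex_skeleton_vd_full G r hr
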